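/- Let A, B ∈ ℝ^{n×n} be symmetric, and let S₁, S₂ ⊂ ℝ be two sets with dist(S₁, S₂) ≥ δ > 0. Let E be the orthogonal projection onto the span of eigenvectors of A with eigenvalues in S₁, and F the orthogonal projection onto the span of eigenvectors of B with eigenvalues in S₂. Then ‖EF‖_F ≤ ‖A − B‖_F / δ. -/

import Mathlib

open Matrix
open scoped Classical

noncomputable def frobNorm {n : ℕ} (A : Matrix (Fin n) (Fin n) ℝ) : ℝ :=
  Real.sqrt (Matrix.trace (Aᵀ * A))

namespace FrobAux

variable {n : ℕ}

/-- Frobenius norm squared as a sum of squares of entries. -/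
def frobSq (X : Matrix (Fin n) (Fin n) ℝ) : ℝ := ∑ i, ∑ j, (X i j) ^ 2

lemma trace_eq_frobSq (X : Matrix (Fin n) (Fin n) ℝ) :
    Matrix.trace (Xᵀ * X) = frobSq X := by
  rw [frobSq, Finset.sum_comm]
  simp [Matrix.trace, Matrix.mul_apply, Matrix.diag, pow_two]

lemma frobSq_nonneg (X : Matrix (Fin n) (Fin n) ℝ) : 0 ≤ frobSq X := by
  apply Finset.sum_nonneg; intro i _
  apply Finset.sum_nonneg; intro j _
  positivity

lemma frobNorm_eq (X : Matrix (Fin n) (Fin n) ℝ) :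
    frobNorm X = Real.sqrt (frobSq X) := by
  rw [frobNorm, trace_eq_frobSq]

/-- Unitary invariance of the Frobenius norm. -/
lemma frob_conj (U V X : Matrix (Fin n) (Fin n) ℝ)
    (hU : Uᵀ * U = 1) (hVl : Vᵀ * V = 1) (hVr : V * Vᵀ = 1) :
    frobNorm (U * X * Vᵀ) = frobNorm X := by
  unfold frobNorm
  congr 1
  have h1 : (U * X * Vᵀ)ᵀ * (U * X * Vᵀ) = V * (Xᵀ * X) * Vᵀ := by
    simp only [Matrix.transpose_mul, Matrix.transpose_transpose, Matrix.mul_assoc]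
    rw [← Matrix.mul_assoc Uᵀ U, hU, Matrix.one_mul]
  rw [h1, Matrix.trace_mul_comm, ← Matrix.mul_assoc, hVl, Matrix.one_mul]

end FrobAux

open FrobAux

/-- Bhatia VII.3.1 for symmetric matrices: if `E`, `F` are the spectral projections of `A`
and `B` onto eigenvalues lying in sets `S₁`, `S₂` separated by `δ > 0`, then
`‖EF‖_F ≤ ‖A − B‖_F/δ`. -/
theorem spectral_proj_product_bound (n : ℕ)
    (A B : Matrix (Fin n) (Fin n) ℝ) (hA : A.IsHermitian) (hB : B.IsHermitian)
    (S₁ S₂ : Set ℝ) (δ : ℝ) (hδ : 0 < δ)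
    (hsep : ∀ x ∈ S₁, ∀ y ∈ S₂, δ ≤ |x - y|)
    (E F : Matrix (Fin n) (Fin n) ℝ)
    (hE : E = (hA.eigenvectorUnitary : Matrix (Fin n) (Fin n) ℝ) *
      Matrix.diagonal (fun i => if hA.eigenvalues i ∈ S₁ then (1 : ℝ) else 0) *
      (hA.eigenvectorUnitary : Matrix (Fin n) (Fin n) ℝ)ᴴ)
    (hF : F = (hB.eigenvectorUnitary : Matrix (Fin n) (Fin n) ℝ) *
      Matrix.diagonal (fun i => if hB.eigenvalues i ∈ S₂ then (1 : ℝ) else 0) *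
      (hB.eigenvectorUnitary : Matrix (Fin n) (Fin n) ℝ)ᴴ) :
    frobNorm (E * F) ≤ frobNorm (A - B) / δ := by
  set U : Matrix (Fin n) (Fin n) ℝ := (hA.eigenvectorUnitary : Matrix (Fin n) (Fin n) ℝ) with hUdef
  set V : Matrix (Fin n) (Fin n) ℝ := (hB.eigenvectorUnitary : Matrix (Fin n) (Fin n) ℝ) with hVdef
  have hUmem := hA.eigenvectorUnitary.2
  have hVmem := hB.eigenvectorUnitary.2
  rw [Matrix.mem_unitaryGroup_iff'] at hUmem hVmem
  have hUmem' := hA.eigenvectorUnitary.2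
  have hVmem' := hB.eigenvectorUnitary.2
  rw [Matrix.mem_unitaryGroup_iff] at hUmem' hVmem'
  have hstarU : star U = Uᵀ := by
    rw [show star U = Uᴴ from rfl, Matrix.conjTranspose_eq_transpose_of_trivial]
  have hstarV : star V = Vᵀ := by
    rw [show star V = Vᴴ from rfl, Matrix.conjTranspose_eq_transpose_of_trivial]
  have hU1 : Uᵀ * U = 1 := by rw [← hstarU]; exact hUmem
  have hU2 : U * Uᵀ = 1 := by rw [← hstarU]; exact hUmem'
  have hV1 : Vᵀ * V = 1 := by rw [← hstarV]; exact hVmem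
  have hV2 : V * Vᵀ = 1 := by rw [← hstarV]; exact hVmem'
  set d₁ : Fin n → ℝ := fun i => if hA.eigenvalues i ∈ S₁ then (1 : ℝ) else 0 with hd₁
  set d₂ : Fin n → ℝ := fun i => if hB.eigenvalues i ∈ S₂ then (1 : ℝ) else 0 with hd₂
  set G : Matrix (Fin n) (Fin n) ℝ := Uᵀ * V with hG
  -- E * F in diagonal frames
  have hEF : E * F = U * (Matrix.diagonal d₁ * G * Matrix.diagonal d₂) * Vᵀ := by
    rw [hE, hF]
    rw [Matrix.conjTranspose_eq_transpose_of_trivial, Matrix.conjTranspose_eq_transpose_of_trivial]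
    simp only [← hUdef, ← hVdef, hG, Matrix.mul_assoc]
  -- A - B in the two frames
  have hΛ : A = U * Matrix.diagonal hA.eigenvalues * Uᵀ := by
    have := hA.spectral_theorem
    rw [Unitary.conjStarAlgAut_apply] at this
    rw [hstarU] at this
    simpa using this
  have hM : B = V * Matrix.diagonal hB.eigenvalues * Vᵀ := by
    have := hB.spectral_theorem
    rw [Unitary.conjStarAlgAut_apply] at this
    rw [hstarV] at this
    simpa using this
  have hAB : A - B = U * (Matrix.diagonal hA.eigenvalues * G - G * Matrix.diagonal hB.eigenvalues)
      * Vᵀ := by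
    have e1 : U * (Matrix.diagonal hA.eigenvalues * G) * Vᵀ = A := by
      calc U * (Matrix.diagonal hA.eigenvalues * G) * Vᵀ
          = (U * Matrix.diagonal hA.eigenvalues * Uᵀ) * (V * Vᵀ) := by
            simp only [hG, Matrix.mul_assoc]
        _ = A := by rw [hV2, Matrix.mul_one, ← hΛ]
    have e2 : U * (G * Matrix.diagonal hB.eigenvalues) * Vᵀ = B := by
      calc U * (G * Matrix.diagonal hB.eigenvalues) * Vᵀ
          = (U * Uᵀ) * (V * Matrix.diagonal hB.eigenvalues * Vᵀ) := by
            simp only [hG, Matrix.mul_assoc]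
        _ = B := by rw [hU2, Matrix.one_mul, ← hM]
    rw [Matrix.mul_sub, Matrix.sub_mul, e1, e2]
  rw [hEF, hAB, frob_conj _ _ _ hU1 hV1 hV2, frob_conj _ _ _ hU1 hV1 hV2]
  -- now entrywise estimate
  rw [frobNorm_eq, frobNorm_eq, le_div_iff₀ hδ]
  set X := Matrix.diagonal d₁ * G * Matrix.diagonal d₂ with hX
  set Y := Matrix.diagonal hA.eigenvalues * G - G * Matrix.diagonal hB.eigenvalues with hY
  have key : δ ^ 2 * frobSq X ≤ frobSq Y := by
    rw [frobSq, frobSq, Finset.mul_sum]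
    apply Finset.sum_le_sum
    intro i _
    rw [Finset.mul_sum]
    apply Finset.sum_le_sum
    intro j _
    have hXij : X i j = d₁ i * G i j * d₂ j := by
      rw [hX, Matrix.mul_diagonal, Matrix.diagonal_mul]
    have hYij : Y i j = (hA.eigenvalues i - hB.eigenvalues j) * G i j := by
      rw [hY, Matrix.sub_apply, Matrix.mul_diagonal, Matrix.diagonal_mul, sub_mul]
      ring
    rw [hXij, hYij]
    by_cases h1 : hA.eigenvalues i ∈ S₁
    · by_cases h2 : hB.eigenvalues j ∈ S₂
      · have hd1 : d₁ i = 1 := by simp [hd₁, h1]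
        have hd2 : d₂ j = 1 := by simp [hd₂, h2]
        rw [hd1, hd2, one_mul, mul_one]
        have hsep' := hsep _ h1 _ h2
        have : δ ^ 2 ≤ (hA.eigenvalues i - hB.eigenvalues j) ^ 2 := by
          rw [← sq_abs (hA.eigenvalues i - hB.eigenvalues j)]
          exact pow_le_pow_left₀ hδ.le hsep' 2
        calc δ ^ 2 * G i j ^ 2 ≤ (hA.eigenvalues i - hB.eigenvalues j) ^ 2 * G i j ^ 2 :=
              mul_le_mul_of_nonneg_right this (sq_nonneg _)
          _ = ((hA.eigenvalues i - hB.eigenvalues j) * G i j) ^ 2 := by ring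
      · have hd2 : d₂ j = 0 := by simp [hd₂, h2]
        rw [hd2]
        simp [sq_nonneg]
    · have hd1 : d₁ i = 0 := by simp [hd₁, h1]
      rw [hd1]
      simp [sq_nonneg]
  calc Real.sqrt (frobSq X) * δ = Real.sqrt (frobSq X) * Real.sqrt (δ ^ 2) := by
        rw [Real.sqrt_sq hδ.le]
    _ = Real.sqrt (δ ^ 2 * frobSq X) := by rw [mul_comm, ← Real.sqrt_mul (sq_nonneg δ)]
    _ ≤ Real.sqrt (frobSq Y) := Real.sqrt_le_sqrt key
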